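/- Let S11, S22, S33 be nonnegative reals and g12, g23, g13 complex numbers of modulus at most 1, and let S be the 3×3 Hermitian matrix with diagonal S11, S22, S33 and S12 = √S11 · g12 · √S22, S23 = √S22 · g23 · √S33, S13 = √S11 · (g12·g23 + d12·g13·d23) · √S33, where d_{kj} = √(1−|g_{kj}|²). Then det S = S11 · S22 · S33 · (1−|g12|²) · (1−|g23|²) · (1−|g13|²). -/

import Mathlib

open Matrix

/-- the d = 3 scalar case of the determinant formula
`det ρ = (∏ ρ_kk) ∏ (1 − |g_kj|²)`. -/
theorem stmt_4 (S11 S22 S33 : ℝ) (h11 : 0 ≤ S11) (h22 : 0 ≤ S22) (h33 : 0 ≤ S33)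
    (g12 g23 g13 : ℂ) (hg12 : ‖g12‖ ≤ 1) (hg23 : ‖g23‖ ≤ 1) (hg13 : ‖g13‖ ≤ 1)
    (d12 d23 d13 : ℝ)
    (hd12 : d12 = Real.sqrt (1 - ‖g12‖ ^ 2)) (hd23 : d23 = Real.sqrt (1 - ‖g23‖ ^ 2))
    (hd13 : d13 = Real.sqrt (1 - ‖g13‖ ^ 2))
    (S : Matrix (Fin 3) (Fin 3) ℂ)
    (hS : S = !![(S11 : ℂ),
                 (Real.sqrt S11 : ℂ) * g12 * (Real.sqrt S22 : ℂ),
                 (Real.sqrt S11 : ℂ) * (g12 * g23 + (d12 : ℂ) * g13 * (d23 : ℂ)) *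
                   (Real.sqrt S33 : ℂ);
                 star ((Real.sqrt S11 : ℂ) * g12 * (Real.sqrt S22 : ℂ)),
                 (S22 : ℂ),
                 (Real.sqrt S22 : ℂ) * g23 * (Real.sqrt S33 : ℂ);
                 star ((Real.sqrt S11 : ℂ) * (g12 * g23 + (d12 : ℂ) * g13 * (d23 : ℂ)) *
                   (Real.sqrt S33 : ℂ)),
                 star ((Real.sqrt S22 : ℂ) * g23 * (Real.sqrt S33 : ℂ)),
                 (S33 : ℂ)]) :
    S.det = ((S11 * S22 * S33 * (1 - ‖g12‖ ^ 2) * (1 - ‖g23‖ ^ 2) * (1 - ‖g13‖ ^ 2) : ℝ) : ℂ) := by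
  subst hS hd12 hd23 hd13
  have ha : (Real.sqrt S11 : ℂ) * (Real.sqrt S11 : ℂ) = (S11 : ℂ) := by
    norm_cast; exact Real.mul_self_sqrt h11
  have hb : (Real.sqrt S22 : ℂ) * (Real.sqrt S22 : ℂ) = (S22 : ℂ) := by
    norm_cast; exact Real.mul_self_sqrt h22
  have hc : (Real.sqrt S33 : ℂ) * (Real.sqrt S33 : ℂ) = (S33 : ℂ) := by
    norm_cast; exact Real.mul_self_sqrt h33
  have hn12 : g12 * (starRingEnd ℂ) g12 = ((‖g12‖ ^ 2 : ℝ) : ℂ) := by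
    simp [Complex.mul_conj, Complex.normSq_eq_norm_sq]
  have hn23 : g23 * (starRingEnd ℂ) g23 = ((‖g23‖ ^ 2 : ℝ) : ℂ) := by
    simp [Complex.mul_conj, Complex.normSq_eq_norm_sq]
  have hn13 : g13 * (starRingEnd ℂ) g13 = ((‖g13‖ ^ 2 : ℝ) : ℂ) := by
    simp [Complex.mul_conj, Complex.normSq_eq_norm_sq]
  have hD12 : ((Real.sqrt (1 - ‖g12‖ ^ 2) : ℝ) : ℂ) * ((Real.sqrt (1 - ‖g12‖ ^ 2) : ℝ) : ℂ)
      = 1 - ((‖g12‖ ^ 2 : ℝ) : ℂ) := by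
    rw [← Complex.ofReal_mul, Real.mul_self_sqrt (by nlinarith [norm_nonneg g12])]
    push_cast; ring
  have hD23 : ((Real.sqrt (1 - ‖g23‖ ^ 2) : ℝ) : ℂ) * ((Real.sqrt (1 - ‖g23‖ ^ 2) : ℝ) : ℂ)
      = 1 - ((‖g23‖ ^ 2 : ℝ) : ℂ) := by
    rw [← Complex.ofReal_mul, Real.mul_self_sqrt (by nlinarith [norm_nonneg g23])]
    push_cast; ring
  rw [Matrix.det_fin_three]
  simp only [Matrix.cons_val', Matrix.cons_val_zero, Matrix.cons_val_one, Matrix.head_cons,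
    Matrix.empty_val', Matrix.cons_val_fin_one, Matrix.cons_val_two, Matrix.tail_cons,
    Matrix.of_apply, Matrix.head_fin_const, star_add, Complex.star_def, Complex.conj_ofReal,
    _root_.map_mul, map_add]
  push_cast
  rw [← ha, ← hb, ← hc]
  push_cast at hn12 hn23 hn13 hD12 hD23
  set a := (Real.sqrt S11 : ℂ)
  set b := (Real.sqrt S22 : ℂ)
  set c := (Real.sqrt S33 : ℂ)
  set d := ((Real.sqrt (1 - ‖g12‖ ^ 2) : ℝ) : ℂ)
  set e := ((Real.sqrt (1 - ‖g23‖ ^ 2) : ℝ) : ℂ)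
  set G12 := (starRingEnd ℂ) g12
  set G23 := (starRingEnd ℂ) g23
  set G13 := (starRingEnd ℂ) g13
  linear_combination (a * a * b * b * c * c) *
    (-(1 - g23 * G23) * hn12 - (1 - (‖g12‖ : ℂ) ^ 2) * hn23
      - e * e * (g13 * G13) * hD12 - (1 - (‖g12‖ : ℂ) ^ 2) * (g13 * G13) * hD23
      - (1 - (‖g12‖ : ℂ) ^ 2) * (1 - (‖g23‖ : ℂ) ^ 2) * hn13)
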